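/- Let K be a field of characteristic zero and k a positive integer. Set R = K[x^{1/(2k-1)}, x^{-1/(2k-1)}, y] and let α be the K-derivation on R with α(x) = y, α(y) = x^{-(2k+1)/(2k-1)}. Define constants a_{2k+1} ∈ K\{0\} arbitrary, a_{2k} = a_{2k+1}, and for 0 < l ≤ k: a_{2(k-l)+1} = (-(2k+1)/(2k-1)·a_{2(k-l)+2} - (2(k-l)+3)·a_{2(k-l)+3}) / ((1 - (2k+1)/(2k-1))·l), a_{2(k-l)} = (a_{2(k-l)+1} - (2(k-l)+2)·a_{2(k-l)+2}) / ((1 - (2k+1)/(2k-1))·l + 1). Then the K-derivation β with β(x) = Σ_{l=0}^{k} a_{2(k-l)} · x^{1 + (1 - (2k+1)/(2k-1))·l} · y^{2(k-l)} and β(y) = Σ_{l=0}^{k} a_{2(k-l)+1} · x^{(1 - (2k+1)/(2k-1))·l} · y^{2(k-l)+1} commutes with α. -/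

import Mathlib

open LaurentPolynomial Polynomial Finset

namespace Stmt13Aux
set_option linter.unusedSectionVars false
variable {K : Type*} [Field K] [CharZero K]

noncomputable def Z (K : Type*) [CommSemiring K] (n : ℤ) : Polynomial (LaurentPolynomial K) :=
  Polynomial.C (T n)

lemma Z_mul (m n : ℤ) : Z K m * Z K n = Z K (m + n) := by
  rw [Z, Z, Z, ← map_mul, ← T_add]

lemma Z_zero : Z K 0 = 1 := by rw [Z, T_zero, map_one]

lemma mono_eq (c : K) (m : ℤ) (e : ℕ) :
    Polynomial.C (c • T m) * (X : Polynomial (LaurentPolynomial K)) ^ e = c • (Z K m * X ^ e) := by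
  rw [← Polynomial.smul_C, smul_mul_assoc, Z]

variable (D : Derivation K (Polynomial (LaurentPolynomial K)) (Polynomial (LaurentPolynomial K)))

lemma D_T_neg_one : D (Z K (-1)) = -(Z K (-2) * D (Z K 1)) := by
  have h : Z K 1 * Z K (-1) = 1 := by rw [Z_mul]; norm_num [Z_zero]
  have h2 := D.leibniz (Z K 1) (Z K (-1))
  rw [h, D.map_one_eq_zero, smul_eq_mul, smul_eq_mul] at h2
  have h3 := congrArg (fun r => Z K (-1) * r) h2
  simp only [mul_zero, mul_add, ← mul_assoc] at h3
  rw [show Z K (-1) * Z K 1 = 1 by rw [Z_mul]; norm_num [Z_zero], one_mul, Z_mul] at h3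
  norm_num at h3
  linear_combination -h3

lemma D_T_neg_one' : D (Z K (-1)) = ((-1 : K)) • (Z K (-2) * D (Z K 1)) := by
  rw [neg_one_smul]; exact D_T_neg_one D

lemma D_T (n : ℤ) : D (Z K n) = (n : K) • (Z K (n - 1) * D (Z K 1)) := by
  induction n using Int.induction_on with
  | zero => simp [Z_zero]
  | succ i ih =>
    have e : Z K ((i : ℤ) + 1) = Z K i * Z K 1 := (Z_mul _ _).symm
    rw [e, D.leibniz, smul_eq_mul, smul_eq_mul, ih, mul_smul_comm, ← mul_assoc, Z_mul,
      show ((1 : ℤ) + ((i : ℤ) - 1)) = (i : ℤ) from by ring,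
      show ((i : ℤ) + 1 - 1 : ℤ) = (i : ℤ) from by ring]
    push_cast
    module
  | pred i ih =>
    have e : Z K (-(i : ℤ) - 1) = Z K (-(i : ℤ)) * Z K (-1) := by
      rw [Z_mul, show (-(i : ℤ) + -1) = (-(i : ℤ) - 1) from by ring]
    rw [e, D.leibniz, smul_eq_mul, smul_eq_mul, ih, D_T_neg_one']
    simp only [mul_smul_comm, ← mul_assoc, Z_mul]
    rw [show (-(i : ℤ) + -2 : ℤ) = -(i : ℤ) - 1 - 1 from by ring,
      show (-1 + (-(i : ℤ) - 1) : ℤ) = -(i : ℤ) - 1 - 1 from by ring]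
    push_cast
    module

lemma D_T_of (t : ℤ) (ht : (t : K) ≠ 0) (V : Polynomial (LaurentPolynomial K))
    (hV : D (Z K t) = V) (n : ℤ) :
    D (Z K n) = ((n : K) / (t : K)) • (Z K (n - t) * V) := by
  have h1 : D (Z K 1) = ((t : K))⁻¹ • (Z K (1 - t) * V) := by
    rw [D_T D t] at hV
    rw [← hV, mul_smul_comm, ← mul_assoc, Z_mul,
      show ((1 : ℤ) - t + (t - 1)) = 0 from by ring, Z_zero, one_mul, smul_smul,
      inv_mul_cancel₀ ht, one_smul]
  rw [D_T D n, h1, mul_smul_comm, ← mul_assoc, Z_mul,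
    show ((n : ℤ) - 1 + (1 - t)) = n - t from by ring, smul_smul, div_eq_mul_inv]

lemma ext_zero (hT : ∀ n : ℤ, D (Z K n) = 0) (hX : D Polynomial.X = 0) : ∀ p, D p = 0 := by
  have hC : ∀ b : LaurentPolynomial K, D (Polynomial.C b) = 0 := by
    intro b
    induction b using LaurentPolynomial.induction_on' with
    | add p q hp hq => rw [map_add, map_add, hp, hq, add_zero]
    | C_mul_T n c =>
      have e : Polynomial.C (LaurentPolynomial.C c * T n)
          = algebraMap K (Polynomial (LaurentPolynomial K)) c * Z K n := by
        rw [map_mul, Z, Polynomial.algebraMap_apply, ← LaurentPolynomial.C_eq_algebraMap]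
      rw [e, D.leibniz, hT, D.map_algebraMap, smul_zero, smul_zero, add_zero]
  intro p
  induction p using Polynomial.induction_on with
  | C b => exact hC b
  | add p q hp hq => rw [map_add, hp, hq, add_zero]
  | monomial n c ih =>
    rw [pow_succ, ← mul_assoc, D.leibniz, ih, hX, smul_zero, smul_zero, add_zero]

lemma alpha_mono (t : ℤ)
    (hT : ∀ n : ℤ, D (Z K n) = ((n : K) / (t : K)) • (Z K (n - t) * Polynomial.X))
    (hX : D Polynomial.X = Z K (-t - 2)) (c : K) (m : ℤ) (e : ℕ) :
    D (c • (Z K m * Polynomial.X ^ e)) =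
      (c * (e : K)) • (Z K (m - t - 2) * Polynomial.X ^ (e - 1))
        + (c * ((m : K) / (t : K))) • (Z K (m - t) * Polynomial.X ^ (e + 1)) := by
  rw [D.map_smul, D.leibniz, D.leibniz_pow, hT, hX]
  simp only [smul_eq_mul, ← Nat.cast_smul_eq_nsmul K, mul_smul_comm, smul_smul, smul_add]
  refine congrArg₂ (· + ·) ?_ ?_
  · rw [show Z K m * (Polynomial.X ^ (e - 1) * Z K (-t - 2))
        = Z K m * Z K (-t - 2) * Polynomial.X ^ (e - 1) from by ring, Z_mul,
      show (m + (-t - 2) : ℤ) = m - t - 2 from by ring]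
  · rw [show Z K (m - t) * Polynomial.X ^ (e + 1)
        = Polynomial.X ^ e * (Z K (m - t) * Polynomial.X) from by ring]

end Stmt13Aux


open Stmt13Aux

set_option maxHeartbeats 2000000 in
/-- On `R = K[x^{1/(2k-1)}, x^{-1/(2k-1)}, y]` (Laurent polynomials in
`z = x^{1/(2k-1)}` with polynomial variable `y`), the derivation `α` with `α(x) = y`,
`α(y) = x^{-(2k+1)/(2k-1)}` commutes with the derivation `β` with
`β(x) = Σ_{l=0}^k a_{2(k-l)} x^{1+(1-(2k+1)/(2k-1))l} y^{2(k-l)}` and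
`β(y) = Σ_{l=0}^k a_{2(k-l)+1} x^{(1-(2k+1)/(2k-1))l} y^{2(k-l)+1}`, where the `a_i ∈ K`
satisfy the stated recursion.  (Note `x^{1+(1-(2k+1)/(2k-1))l} = z^{2k-1-2l}` and
`x^{(1-(2k+1)/(2k-1))l} = z^{-2l}`.) -/
theorem stmt13 (K : Type*) [Field K] [CharZero K] (k : ℕ) (hk : 1 ≤ k) (a : ℕ → K)
    (h0 : a (2 * k + 1) ≠ 0)
    (h1 : a (2 * k) = a (2 * k + 1))
    (h2 : ∀ l, 0 < l → l ≤ k →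
      a (2 * (k - l) + 1) =
        (-((2 * (k : K) + 1) / (2 * (k : K) - 1)) * a (2 * (k - l) + 2)
          - (2 * ((k : K) - (l : K)) + 3) * a (2 * (k - l) + 3))
        * ((1 - (2 * (k : K) + 1) / (2 * (k : K) - 1)) * (l : K))⁻¹)
    (h3 : ∀ l, 0 < l → l ≤ k →
      a (2 * (k - l)) =
        (a (2 * (k - l) + 1) - (2 * ((k : K) - (l : K)) + 2) * a (2 * (k - l) + 2))
        * ((1 - (2 * (k : K) + 1) / (2 * (k : K) - 1)) * (l : K) + 1)⁻¹)
    (α β : Derivation K (Polynomial (LaurentPolynomial K)) (Polynomial (LaurentPolynomial K)))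
    (hαx : α (Polynomial.C (T (2 * (k : ℤ) - 1))) = Polynomial.X)
    (hαy : α Polynomial.X = Polynomial.C (T (-(2 * (k : ℤ) + 1))))
    (hβx : β (Polynomial.C (T (2 * (k : ℤ) - 1))) =
      ∑ l ∈ range (k + 1),
        Polynomial.C (a (2 * (k - l)) • T (2 * (k : ℤ) - 1 - 2 * (l : ℤ))) *
          Polynomial.X ^ (2 * (k - l)))
    (hβy : β Polynomial.X =
      ∑ l ∈ range (k + 1),
        Polynomial.C (a (2 * (k - l) + 1) • T (-(2 * (l : ℤ)))) *
          Polynomial.X ^ (2 * (k - l) + 1)) :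
    ∀ p, α (β p) = β (α p) := by
  simp only [mono_eq] at hβx hβy
  set t : ℤ := 2 * (k : ℤ) - 1 with ht
  have htK : ((t : ℤ) : K) ≠ 0 := by
    rw [Int.cast_ne_zero]; omega
  have hαx' : α (Z K t) = Polynomial.X := hαx
  have hβx' : β (Z K t) =
      ∑ l ∈ range (k + 1), a (2 * (k - l)) • (Z K (t - 2 * (l : ℤ)) * Polynomial.X ^ (2 * (k - l))) :=
    hβx
  have hαy' : α Polynomial.X = Z K (-t - 2) := by
    rw [hαy]
    rw [show (-(2 * (k : ℤ) + 1)) = -t - 2 from by omega]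
    rfl
  have hαT : ∀ n : ℤ, α (Z K n) = ((n : K) / ((t : ℤ) : K)) • (Z K (n - t) * Polynomial.X) :=
    D_T_of α t htK _ hαx'
  have hβT : ∀ n : ℤ, β (Z K n) = ((n : K) / ((t : ℤ) : K)) •
      (Z K (n - t) * ∑ l ∈ range (k + 1),
        a (2 * (k - l)) • (Z K (t - 2 * (l : ℤ)) * Polynomial.X ^ (2 * (k - l)))) :=
    D_T_of β t htK _ hβx'
  have key1 : α (β (Z K t)) = β (α (Z K t)) := by
    rw [hβx', hαx', hβy, map_sum]
    have expand1 : ∀ l ∈ range (k + 1),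
        α (a (2 * (k - l)) • (Z K (t - 2 * (l : ℤ)) * Polynomial.X ^ (2 * (k - l)))) =
          (a (2 * (k - l)) * ((2 * (k - l) : ℕ) : K)) •
              (Z K (-(2 * (l : ℤ)) - 2) * Polynomial.X ^ (2 * (k - l) - 1))
            + (a (2 * (k - l)) * ((((t - 2 * (l : ℤ)) : ℤ) : K) / ((t : ℤ) : K))) •
              (Z K (-(2 * (l : ℤ))) * Polynomial.X ^ (2 * (k - l) + 1)) := by
      intro l _
      rw [alpha_mono α t hαT hαy',
        show (t - 2 * (l : ℤ) - t - 2 : ℤ) = -(2 * (l : ℤ)) - 2 from by ring,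
        show (t - 2 * (l : ℤ) - t : ℤ) = -(2 * (l : ℤ)) from by ring]
    rw [Finset.sum_congr rfl expand1, Finset.sum_add_distrib, ← eq_sub_iff_add_eq,
      ← Finset.sum_sub_distrib, Finset.sum_range_succ, Finset.sum_range_succ']
    have hAk : (a (2 * (k - k)) * ((2 * (k - k) : ℕ) : K)) •
        (Z K (-(2 * (k : ℤ)) - 2) * Polynomial.X ^ (2 * (k - k) - 1)) = 0 := by
      rw [Nat.sub_self]
      norm_num
    have h0term : a (2 * (k - 0) + 1) • (Z K (-(2 * ((0 : ℕ) : ℤ))) * Polynomial.X ^ (2 * (k - 0) + 1))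
        - (a (2 * (k - 0)) * ((((t - 2 * ((0 : ℕ) : ℤ)) : ℤ) : K) / ((t : ℤ) : K))) •
          (Z K (-(2 * ((0 : ℕ) : ℤ))) * Polynomial.X ^ (2 * (k - 0) + 1)) = 0 := by
      rw [Nat.sub_zero]
      rw [show ((0 : ℕ) : ℤ) = 0 from rfl]
      rw [show (t - 2 * (0 : ℤ) : ℤ) = t from by ring]
      rw [div_self htK, mul_one, h1, ← sub_smul, sub_self, zero_smul]
    rw [hAk, h0term, add_zero, add_zero]
    refine Finset.sum_congr rfl fun l hl => ?_
    have hlk : l < k := mem_range.mp hl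
    rw [show (2 * (k - (l + 1)) + 1) = 2 * (k - l) - 1 from by omega,
      show (-(2 * (((l + 1 : ℕ)) : ℤ))) = -(2 * (l : ℤ)) - 2 from by push_cast; ring,
      ← sub_smul]
    congr 1
    have e3 := h3 (l + 1) (Nat.succ_pos l) (by omega)
    rw [show (2 * (k - (l + 1)) + 1) = 2 * (k - l) - 1 from by omega,
      show (2 * (k - (l + 1)) + 2) = 2 * (k - l) from by omega] at e3
    have ht2 : (2 * (k : K) - 1) ≠ 0 := by
      have : ((2 * (k : ℤ) - 1 : ℤ) : K) ≠ 0 := Int.cast_ne_zero.mpr (by omega)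
      push_cast at this
      exact this
    have hodd : (2 * (k : K) - 2 * (l : K) - 3) ≠ 0 := by
      have : ((2 * (k : ℤ) - 2 * (l : ℤ) - 3 : ℤ) : K) ≠ 0 := Int.cast_ne_zero.mpr (by omega)
      push_cast at this
      exact this
    have hBform : (1 - (2 * (k : K) + 1) / (2 * (k : K) - 1)) * ((l + 1 : ℕ) : K) + 1
        = (2 * (k : K) - 2 * (l : K) - 3) / (2 * (k : K) - 1) := by
      push_cast
      field_simp
      ring
    rw [hBform] at e3
    rw [e3, ht]
    push_cast [Nat.cast_sub hlk.le, Nat.cast_sub (show l + 1 ≤ k from hlk)]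
    have hodd' : (2 * ((k : K) - (l : K)) - 3) ≠ 0 := by convert hodd using 1; ring
    field_simp
    ring
  have hJ : ∀ l, l ≤ k → (2 * ((k : K) - (l : K)) - 1) * (2 * (k : K) + 1) * a (2 * (k - l))
      = (2 * ((k : K) - (l : K)) + 1) * (2 * (k : K) - 1) * a (2 * (k - l) + 1) := by
    intro l
    induction l with
    | zero =>
      intro _
      rw [Nat.sub_zero, h1]
      push_cast
      ring
    | succ n ih =>
      intro hnk
      have hJn := ih (by omega)
      have e3 := h3 (n + 1) (Nat.succ_pos n) hnk
      have e2 := h2 (n + 1) (Nat.succ_pos n) hnk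
      rw [show (2 * (k - (n + 1)) + 2) = 2 * (k - n) from by omega,
        show (2 * (k - (n + 1)) + 3) = 2 * (k - n) + 1 from by omega] at e2
      rw [show (2 * (k - (n + 1)) + 2) = 2 * (k - n) from by omega] at e3
      have ht2 : (2 * (k : K) - 1) ≠ 0 := by
        have : ((2 * (k : ℤ) - 1 : ℤ) : K) ≠ 0 := Int.cast_ne_zero.mpr (by omega)
        push_cast at this; exact this
      have hs : (2 * (k : K) + 1) ≠ 0 := by
        have : ((2 * (k : ℤ) + 1 : ℤ) : K) ≠ 0 := Int.cast_ne_zero.mpr (by omega)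
        push_cast at this; exact this
      have hn1 : ((n : K) + 1) ≠ 0 := by
        have : (((n : ℤ) + 1 : ℤ) : K) ≠ 0 := Int.cast_ne_zero.mpr (by omega)
        push_cast at this; exact this
      have hodd3 : (2 * (k : K) - 2 * (n : K) - 3) ≠ 0 := by
        have : ((2 * (k : ℤ) - 2 * (n : ℤ) - 3 : ℤ) : K) ≠ 0 := Int.cast_ne_zero.mpr (by omega)
        push_cast at this; exact this
      have hodd1 : (2 * ((k : K) - (n : K)) - 1) ≠ 0 := by
        have : ((2 * ((k : ℤ) - (n : ℤ)) - 1 : ℤ) : K) ≠ 0 := Int.cast_ne_zero.mpr (by omega)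
        push_cast at this
        convert this using 1
      have hBform3 : (1 - (2 * (k : K) + 1) / (2 * (k : K) - 1)) * ((n + 1 : ℕ) : K) + 1
          = (2 * (k : K) - 2 * (n : K) - 3) / (2 * (k : K) - 1) := by
        push_cast
        field_simp
        ring
      have hBform2 : (1 - (2 * (k : K) + 1) / (2 * (k : K) - 1)) * ((n + 1 : ℕ) : K)
          = (-2 * ((n : K) + 1)) / (2 * (k : K) - 1) := by
        push_cast
        field_simp
        ring
      rw [hBform3] at e3
      rw [hBform2] at e2
      have E3 : a (2 * (k - (n + 1))) * (2 * (k : K) - 2 * (n : K) - 3)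
          = (a (2 * (k - (n + 1)) + 1) - (2 * ((k : K) - ((n + 1 : ℕ) : K)) + 2) * a (2 * (k - n)))
            * (2 * (k : K) - 1) := by
        rw [e3]
        field_simp
        rw [mul_div_assoc, div_self (by convert hodd3 using 1; ring), mul_one]
      have E2 : a (2 * (k - (n + 1)) + 1) * (2 * ((n : K) + 1))
          = (2 * (k : K) + 1) * a (2 * (k - n))
            + (2 * ((k : K) - ((n + 1 : ℕ) : K)) + 3) * a (2 * (k - n) + 1) * (2 * (k : K) - 1) := by
        rw [e2]
        field_simp
        ring
      push_cast at E2 E3 ⊢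
      linear_combination (2 * (k : K) + 1) * E3 + (2 * (k : K) - 1) * E2 - (2 * (k : K) - 1) * hJn
  have key2 : α (β Polynomial.X) = β (α Polynomial.X) := by
    rw [hβy, hαy', map_sum, hβT (-t - 2), Finset.mul_sum, Finset.smul_sum]
    have expand2 : ∀ l ∈ range (k + 1),
        α (a (2 * (k - l) + 1) • (Z K (-(2 * (l : ℤ))) * Polynomial.X ^ (2 * (k - l) + 1))) =
          (a (2 * (k - l) + 1) * ((2 * (k - l) + 1 : ℕ) : K)) •
              (Z K (-(2 * (l : ℤ)) - t - 2) * Polynomial.X ^ (2 * (k - l)))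
            + (a (2 * (k - l) + 1) * (((-(2 * (l : ℤ)) : ℤ) : K) / ((t : ℤ) : K))) •
              (Z K (-(2 * (l : ℤ)) - t) * Polynomial.X ^ (2 * (k - l) + 2)) := by
      intro l _
      rw [alpha_mono α t hαT hαy',
        show (2 * (k - l) + 1 - 1) = 2 * (k - l) from by omega,
        show (2 * (k - l) + 1 + 1) = 2 * (k - l) + 2 from by omega]
    have expandR : ∀ l ∈ range (k + 1),
        ((((-t - 2 : ℤ)) : K) / ((t : ℤ) : K)) •
            (Z K (-t - 2 - t) * (a (2 * (k - l)) • (Z K (t - 2 * (l : ℤ)) * Polynomial.X ^ (2 * (k - l))))) =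
          ((((-t - 2 : ℤ)) : K) / ((t : ℤ) : K) * a (2 * (k - l))) •
            (Z K (-(2 * (l : ℤ)) - t - 2) * Polynomial.X ^ (2 * (k - l))) := by
      intro l _
      rw [mul_smul_comm, smul_smul, ← mul_assoc, Z_mul,
        show (-t - 2 - t + (t - 2 * (l : ℤ))) = -(2 * (l : ℤ)) - t - 2 from by ring]
    rw [Finset.sum_congr rfl expand2, Finset.sum_congr rfl expandR, Finset.sum_add_distrib,
      add_comm, ← eq_sub_iff_add_eq, ← Finset.sum_sub_distrib,
      Finset.sum_range_succ', Finset.sum_range_succ]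
    have hB0 : (a (2 * (k - 0) + 1) * ((((-(2 * ((0 : ℕ) : ℤ))) : ℤ) : K) / ((t : ℤ) : K))) •
        (Z K (-(2 * ((0 : ℕ) : ℤ)) - t) * Polynomial.X ^ (2 * (k - 0) + 2)) = 0 := by
      norm_num
    have hc : (((-t - 2 : ℤ) : K) / ((t : ℤ) : K)) * a (2 * (k - k))
        - a (2 * (k - k) + 1) * ((2 * (k - k) + 1 : ℕ) : K) = 0 := by
      have hJk' := hJ k le_rfl
      rw [Nat.sub_self] at hJk' ⊢
      simp only [Nat.mul_zero, Nat.zero_add] at hJk' ⊢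
      rw [ht]
      push_cast at hJk' ⊢
      have ht2 : (2 * (k : K) - 1) ≠ 0 := by
        have : ((2 * (k : ℤ) - 1 : ℤ) : K) ≠ 0 := Int.cast_ne_zero.mpr (by omega)
        push_cast at this
        exact this
      field_simp
      linear_combination hJk'
    have hJk : (((-t - 2 : ℤ) : K) / ((t : ℤ) : K) * a (2 * (k - k))) •
          (Z K (-(2 * (k : ℤ)) - t - 2) * Polynomial.X ^ (2 * (k - k)))
        - (a (2 * (k - k) + 1) * ((2 * (k - k) + 1 : ℕ) : K)) •
          (Z K (-(2 * (k : ℤ)) - t - 2) * Polynomial.X ^ (2 * (k - k))) = 0 := by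
      rw [← sub_smul, hc, zero_smul]
    rw [hB0, hJk, add_zero, add_zero]
    refine Finset.sum_congr rfl fun l hl => ?_
    have hlk : l < k := mem_range.mp hl
    rw [show (2 * (k - (l + 1)) + 2) = 2 * (k - l) from by omega,
      show (-(2 * (((l + 1 : ℕ)) : ℤ)) - t) = -(2 * (l : ℤ)) - t - 2 from by push_cast; ring,
      ← sub_smul]
    congr 1
    have e2 := h2 (l + 1) (Nat.succ_pos l) (by omega)
    rw [show (2 * (k - (l + 1)) + 2) = 2 * (k - l) from by omega,
      show (2 * (k - (l + 1)) + 3) = 2 * (k - l) + 1 from by omega] at e2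
    have ht2 : (2 * (k : K) - 1) ≠ 0 := by
      have : ((2 * (k : ℤ) - 1 : ℤ) : K) ≠ 0 := Int.cast_ne_zero.mpr (by omega)
      push_cast at this
      exact this
    have hl1 : ((l : K) + 1) ≠ 0 := by
      have : (((l : ℤ) + 1 : ℤ) : K) ≠ 0 := Int.cast_ne_zero.mpr (by omega)
      push_cast at this
      exact this
    have hBform2 : (1 - (2 * (k : K) + 1) / (2 * (k : K) - 1)) * ((l + 1 : ℕ) : K)
        = (-2 * ((l : K) + 1)) / (2 * (k : K) - 1) := by
      push_cast
      field_simp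
      ring
    rw [hBform2] at e2
    rw [e2, ht]
    push_cast [Nat.cast_sub hlk.le]
    field_simp
    ring
  have hzero : ∀ q, (⁅α, β⁆ : Derivation K _ _) q = 0 := by
    apply ext_zero
    · intro n
      have hbt : (⁅α, β⁆ : Derivation K _ _) (Z K t) = 0 := by
        rw [Derivation.commutator_apply, key1, sub_self]
      have h := D_T_of (⁅α, β⁆) t htK 0 hbt n
      simpa using h
    · rw [Derivation.commutator_apply, key2, sub_self]
  intro p
  have h := hzero p
  rw [Derivation.commutator_apply] at h
  exact sub_eq_zero.mp h
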